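/- Let σ be an inversion sequence of size n avoiding the patterns 201 and 210, and let Z ⊆ Zeros(σ). Write L(σ) = {i : σ_j = 0 for all j ≤ i} for the leading zeros and R(σ) = Zeros(σ) \ L(σ). Then child(σ,Z) avoids both 201 and 210 if and only if Z ∩ R(σ) is either empty or equal to R(σ). -/

import Mathlib

def child {n : ℕ} (σ : Fin n → ℕ) (Z : Finset (Fin n)) : Fin (n + 1) → ℕ :=
  Fin.cases 0 (fun i => σ i + (if 0 < σ i then 1 else 0) + (if i ∈ Z then 1 else 0))

def Contains201 {n : ℕ} (σ : Fin n → ℕ) : Prop :=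
  ∃ i j k : Fin n, i < j ∧ j < k ∧ σ j < σ k ∧ σ k < σ i

def Contains210 {n : ℕ} (σ : Fin n → ℕ) : Prop :=
  ∃ i j k : Fin n, i < j ∧ j < k ∧ σ k < σ j ∧ σ j < σ i

/-- The set of zeros of `σ`. -/
def Zeros {n : ℕ} (σ : Fin n → ℕ) : Finset (Fin n) :=
  Finset.univ.filter fun i => σ i = 0

/-- The set of leading zeros of `σ`. -/
def LeadZeros {n : ℕ} (σ : Fin n → ℕ) : Finset (Fin n) :=
  Finset.univ.filter fun i => ∀ j ≤ i, σ j = 0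

lemma child_succ {n : ℕ} (σ : Fin n → ℕ) (Z : Finset (Fin n)) (i : Fin n) :
    child σ Z i.succ = σ i + (if 0 < σ i then 1 else 0) + (if i ∈ Z then 1 else 0) := by
  simp [child]

lemma mem_R_iff {n : ℕ} {σ : Fin n → ℕ} {i : Fin n} :
    i ∈ Zeros σ \ LeadZeros σ ↔ σ i = 0 ∧ ∃ j, j < i ∧ 0 < σ j := by
  simp only [Finset.mem_sdiff, Zeros, LeadZeros, Finset.mem_filter, Finset.mem_univ,
    true_and, not_forall]
  constructor
  · rintro ⟨h0, j, hj, hne⟩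
    refine ⟨h0, j, lt_of_le_of_ne hj ?_, Nat.pos_of_ne_zero hne⟩
    rintro rfl; exact hne h0
  · rintro ⟨h0, j, hj, hpos⟩
    exact ⟨h0, j, le_of_lt hj, by omega⟩

lemma key_lt {n : ℕ} {σ : Fin n → ℕ} {Z : Finset (Fin n)} (hZ : Z ⊆ Zeros σ)
    {a b : Fin n} (h : child σ Z a.succ < child σ Z b.succ)
    (h2 : 2 ≤ child σ Z b.succ) : σ a < σ b := by
  have hb : 0 < σ b := by
    rcases Nat.eq_zero_or_pos (σ b) with h0 | h0
    · rw [child_succ] at h2; simp [h0] at h2; split_ifs at h2 <;> omega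
    · exact h0
  have hbZ : b ∉ Z := by
    intro hb'; have := hZ hb'; simp [Zeros] at this; omega
  rw [child_succ, child_succ] at h
  simp only [hb, hbZ, if_true, if_false, if_pos, if_neg] at h
  split_ifs at h <;> omega

theorem child_avoids_iff (n : ℕ) (σ : Fin n → ℕ) (hσ : ∀ i, σ i ≤ i.val)
    (h201 : ¬ Contains201 σ) (h210 : ¬ Contains210 σ)
    (Z : Finset (Fin n)) (hZ : Z ⊆ Zeros σ) :
    (¬ Contains201 (child σ Z) ∧ ¬ Contains210 (child σ Z)) ↔
      (Z ∩ (Zeros σ \ LeadZeros σ) = ∅ ∨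
        Z ∩ (Zeros σ \ LeadZeros σ) = Zeros σ \ LeadZeros σ) := by
  constructor
  · rintro ⟨hc201, hc210⟩
    by_contra hcon
    push_neg at hcon
    obtain ⟨hne, hneq⟩ := hcon
    obtain ⟨a, ha⟩ := hne
    rw [Finset.mem_inter] at ha
    obtain ⟨haZ, haR⟩ := ha
    have hnsub : ¬ (Zeros σ \ LeadZeros σ) ⊆ Z := by
      intro hs
      exact hneq (by rw [Finset.inter_eq_right]; exact hs)
    obtain ⟨b, hbR, hbZ⟩ := Finset.not_subset.mp hnsub
    obtain ⟨ha0, p, hpa, hp⟩ := mem_R_iff.mp haR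
    obtain ⟨hb0, q, hqb, hq⟩ := mem_R_iff.mp hbR
    have hpZ : p ∉ Z := by intro h'; have := hZ h'; simp [Zeros] at this; omega
    have hqZ : q ∉ Z := by intro h'; have := hZ h'; simp [Zeros] at this; omega
    have hτa : child σ Z a.succ = 1 := by simp [child_succ, ha0, haZ]
    have hτb : child σ Z b.succ = 0 := by simp [child_succ, hb0, hbZ]
    have hτp : child σ Z p.succ = σ p + 1 := by simp [child_succ, hp, hpZ]
    have hτq : child σ Z q.succ = σ q + 1 := by simp [child_succ, hq, hqZ]
    rcases lt_trichotomy a b with hab | hab | hab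
    · exact hc210 ⟨p.succ, a.succ, b.succ, Fin.succ_lt_succ_iff.mpr hpa,
        Fin.succ_lt_succ_iff.mpr hab, by omega, by omega⟩
    · exact hbZ (hab ▸ haZ)
    · exact hc201 ⟨q.succ, b.succ, a.succ, Fin.succ_lt_succ_iff.mpr hqb,
        Fin.succ_lt_succ_iff.mpr hab, by omega, by omega⟩
  · intro h
    constructor
    · rintro ⟨i, j, k, hij, hjk, h1, h2⟩
      -- 201 in child: τ j < τ k < τ i
      have hi0 : i ≠ 0 := by
        rintro rfl; simp [child] at h2
      obtain ⟨p, rfl⟩ := (Fin.eq_zero_or_eq_succ i).resolve_left hi0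
      have hj0 : j ≠ 0 := by rintro rfl; exact absurd hij (Fin.not_lt_zero _)
      obtain ⟨b, rfl⟩ := (Fin.eq_zero_or_eq_succ j).resolve_left hj0
      have hk0 : k ≠ 0 := by rintro rfl; exact absurd hjk (Fin.not_lt_zero _)
      obtain ⟨c, rfl⟩ := (Fin.eq_zero_or_eq_succ k).resolve_left hk0
      rw [Fin.succ_lt_succ_iff] at hij hjk
      have hτi2 : 2 ≤ child σ Z p.succ := by omega
      have hp : 0 < σ p := by
        rw [child_succ] at hτi2; split_ifs at hτi2 <;> omega
      by_cases hk2 : 2 ≤ child σ Z c.succ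
      · exact h201 ⟨p, b, c, hij, hjk, key_lt hZ h1 hk2, key_lt hZ h2 hτi2⟩
      · have hτk : child σ Z c.succ = 1 := by omega
        have hτj : child σ Z b.succ = 0 := by omega
        have hc0 : σ c = 0 := by
          rw [child_succ] at hτk; split_ifs at hτk <;> omega
        have hcZ : c ∈ Z := by
          by_contra hcZ; rw [child_succ] at hτk; simp [hc0, hcZ] at hτk
        have hb0 : σ b = 0 := by
          rw [child_succ] at hτj; split_ifs at hτj <;> omega
        have hbZ : b ∉ Z := by
          intro hbZ; rw [child_succ] at hτj; simp [hb0, hbZ] at hτj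
        have hbR : b ∈ Zeros σ \ LeadZeros σ := mem_R_iff.mpr ⟨hb0, p, hij, hp⟩
        have hcR : c ∈ Zeros σ \ LeadZeros σ :=
          mem_R_iff.mpr ⟨hc0, p, lt_trans hij hjk, hp⟩
        rcases h with h | h
        · have := Finset.mem_inter.mpr ⟨hcZ, hcR⟩
          rw [h] at this; exact absurd this (Finset.notMem_empty c)
        · have := hbR; rw [← h] at this
          exact hbZ (Finset.mem_inter.mp this).1
    · rintro ⟨i, j, k, hij, hjk, h1, h2⟩
      -- 210 in child: τ k < τ j < τ i
      have hi0 : i ≠ 0 := by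
        rintro rfl; simp [child] at h2
      obtain ⟨p, rfl⟩ := (Fin.eq_zero_or_eq_succ i).resolve_left hi0
      have hj0 : j ≠ 0 := by rintro rfl; exact absurd hij (Fin.not_lt_zero _)
      obtain ⟨b, rfl⟩ := (Fin.eq_zero_or_eq_succ j).resolve_left hj0
      have hk0 : k ≠ 0 := by rintro rfl; exact absurd hjk (Fin.not_lt_zero _)
      obtain ⟨c, rfl⟩ := (Fin.eq_zero_or_eq_succ k).resolve_left hk0
      rw [Fin.succ_lt_succ_iff] at hij hjk
      have hτi2 : 2 ≤ child σ Z p.succ := by omega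
      have hp : 0 < σ p := by
        rw [child_succ] at hτi2; split_ifs at hτi2 <;> omega
      by_cases hj2 : 2 ≤ child σ Z b.succ
      · exact h210 ⟨p, b, c, hij, hjk, key_lt hZ h1 hj2, key_lt hZ h2 hτi2⟩
      · have hτj : child σ Z b.succ = 1 := by omega
        have hτk : child σ Z c.succ = 0 := by omega
        have hb0 : σ b = 0 := by
          rw [child_succ] at hτj; split_ifs at hτj <;> omega
        have hbZ : b ∈ Z := by
          by_contra hbZ; rw [child_succ] at hτj; simp [hb0, hbZ] at hτj
        have hc0 : σ c = 0 := by
          rw [child_succ] at hτk; split_ifs at hτk <;> omega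
        have hcZ : c ∉ Z := by
          intro hcZ; rw [child_succ] at hτk; simp [hc0, hcZ] at hτk
        have hbR : b ∈ Zeros σ \ LeadZeros σ := mem_R_iff.mpr ⟨hb0, p, hij, hp⟩
        have hcR : c ∈ Zeros σ \ LeadZeros σ :=
          mem_R_iff.mpr ⟨hc0, p, lt_trans hij hjk, hp⟩
        rcases h with h | h
        · have := Finset.mem_inter.mpr ⟨hbZ, hbR⟩
          rw [h] at this; exact absurd this (Finset.notMem_empty b)
        · have := hcR; rw [← h] at this
          exact hcZ (Finset.mem_inter.mp this).1
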